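/- For all integers r, l, k with 2 ≤ r < l < k, the following strict inequality holds in the rational numbers: ((l−1)(l−2)⋯(l−r)·(l−r−1)) / ((k−1)(k−2)⋯(k−r)·(l−r)) < l²/k². -/
import Mathlib


/-- The bound `(l-1)⋯(l-r)(l-r-1) / ((k-1)⋯(k-r)(l-r)) < l²/k²` for `2 ≤ r < l < k`. -/
theorem stmt_14 (r l k : ℤ) (h2r : 2 ≤ r) (hrl : r < l) (hlk : l < k) :
    (∏ i ∈ Finset.Icc 1 r, ((l : ℚ) - (i : ℚ))) * ((l : ℚ) - (r : ℚ) - 1) /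
        ((∏ i ∈ Finset.Icc 1 r, ((k : ℚ) - (i : ℚ))) * ((l : ℚ) - (r : ℚ))) <
      (l : ℚ) ^ 2 / (k : ℚ) ^ 2 := by
  have hr2 : (2:ℚ) ≤ (r:ℚ) := by exact_mod_cast h2r
  have hrl' : (r:ℚ) < (l:ℚ) := by exact_mod_cast hrl
  have hlk' : (l:ℚ) < (k:ℚ) := by exact_mod_cast hlk
  have hl0 : (0:ℚ) < l := by linarith
  have hk0 : (0:ℚ) < k := by linarith
  have hfl : ∀ i ∈ Finset.Icc 1 r, (0:ℚ) < (l:ℚ) - (i:ℚ) := by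
    intro i hi
    simp only [Finset.mem_Icc] at hi
    have : (i:ℚ) ≤ (r:ℚ) := by exact_mod_cast hi.2
    linarith
  have hfk : ∀ i ∈ Finset.Icc 1 r, (0:ℚ) < (k:ℚ) - (i:ℚ) := by
    intro i hi
    have := hfl i hi
    linarith
  have hPl : 0 < ∏ i ∈ Finset.Icc 1 r, ((l:ℚ) - (i:ℚ)) := Finset.prod_pos hfl
  have hPk : 0 < ∏ i ∈ Finset.Icc 1 r, ((k:ℚ) - (i:ℚ)) := Finset.prod_pos hfk
  have hratio : (∏ i ∈ Finset.Icc 1 r, ((l:ℚ) - (i:ℚ))) /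
      (∏ i ∈ Finset.Icc 1 r, ((k:ℚ) - (i:ℚ))) < ((l:ℚ)/(k:ℚ))^2 := by
    rw [← Finset.prod_div_distrib]
    have h2 : ∏ i ∈ Finset.Icc 1 r, (((l:ℚ) - (i:ℚ))/((k:ℚ) - (i:ℚ))) <
        ∏ _i ∈ Finset.Icc 1 r, ((l:ℚ)/(k:ℚ)) := by
      apply Finset.prod_lt_prod_of_nonempty
      · intro i hi; exact div_pos (hfl i hi) (hfk i hi)
      · intro i hi
        simp only [Finset.mem_Icc] at hi
        have hi1 : (1:ℚ) ≤ (i:ℚ) := by exact_mod_cast hi.1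
        have hir : (i:ℚ) ≤ (r:ℚ) := by exact_mod_cast hi.2
        rw [div_lt_div_iff₀ (by linarith) hk0]
        nlinarith
      · exact Finset.nonempty_Icc.mpr (by linarith)
    rw [Finset.prod_const] at h2
    have hcard : 2 ≤ (Finset.Icc (1:ℤ) r).card := by
      rw [Int.card_Icc]
      omega
    calc ∏ i ∈ Finset.Icc 1 r, (((l:ℚ) - (i:ℚ))/((k:ℚ) - (i:ℚ)))
        < ((l:ℚ)/(k:ℚ))^(Finset.Icc (1:ℤ) r).card := h2
      _ ≤ ((l:ℚ)/(k:ℚ))^2 := by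
          apply pow_le_pow_of_le_one (by positivity)
          · rw [div_le_one hk0]; linarith
          · exact hcard
  have hq0 : (0:ℚ) ≤ ((l:ℚ) - (r:ℚ) - 1)/((l:ℚ) - (r:ℚ)) := by
    apply div_nonneg
    · have : (r:ℤ) + 1 ≤ l := hrl
      have : (r:ℚ) + 1 ≤ (l:ℚ) := by exact_mod_cast this
      linarith
    · linarith
  have hq1 : ((l:ℚ) - (r:ℚ) - 1)/((l:ℚ) - (r:ℚ)) ≤ 1 := by
    rw [div_le_one (by linarith)]
    linarith
  have key : (∏ i ∈ Finset.Icc 1 r, ((l : ℚ) - (i : ℚ))) * ((l : ℚ) - (r : ℚ) - 1) /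
        ((∏ i ∈ Finset.Icc 1 r, ((k : ℚ) - (i : ℚ))) * ((l : ℚ) - (r : ℚ)))
      = ((∏ i ∈ Finset.Icc 1 r, ((l:ℚ) - (i:ℚ))) /
      (∏ i ∈ Finset.Icc 1 r, ((k:ℚ) - (i:ℚ)))) * (((l:ℚ) - (r:ℚ) - 1)/((l:ℚ) - (r:ℚ))) :=
    mul_div_mul_comm _ _ _ _
  rw [key]
  have h3 : ((∏ i ∈ Finset.Icc 1 r, ((l:ℚ) - (i:ℚ))) /
      (∏ i ∈ Finset.Icc 1 r, ((k:ℚ) - (i:ℚ)))) * (((l:ℚ) - (r:ℚ) - 1)/((l:ℚ) - (r:ℚ)))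
      ≤ (∏ i ∈ Finset.Icc 1 r, ((l:ℚ) - (i:ℚ))) /
      (∏ i ∈ Finset.Icc 1 r, ((k:ℚ) - (i:ℚ))) :=
    mul_le_of_le_one_right (le_of_lt (div_pos hPl hPk)) hq1
  calc _ ≤ _ := h3
    _ < ((l:ℚ)/(k:ℚ))^2 := hratio
    _ = (l:ℚ)^2/(k:ℚ)^2 := div_pow _ _ _
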